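/- Let p₁ be a positive odd prime and let p₂ be an integer which is either -1 or a positive prime different from p₁. Then there exist infinitely many primes q with (p₁/q) = -1 and (p₂/q) = -1. -/

import Mathlib

/-- CRT helper: combine units mod `m` and mod `n` into a unit mod `m * n` that detects
both residues. -/
lemma crt_aux {m n : ℕ} (h : Nat.Coprime m n) (a : ZMod m) (b : ZMod n)
    (ha : IsUnit a) (hb : IsUnit b) :
    ∃ c : ZMod (m * n), IsUnit c ∧
      ∀ q : ℕ, (q : ZMod (m * n)) = c → (q : ZMod m) = a ∧ (q : ZMod n) = b := by
  let e := ZMod.chineseRemainder h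
  refine ⟨e.symm (a, b), ?_, ?_⟩
  · obtain ⟨ua, rfl⟩ := ha
    obtain ⟨ub, rfl⟩ := hb
    have : IsUnit ((ua : ZMod m), (ub : ZMod n)) :=
      isUnit_iff_exists_inv.mpr ⟨((ua⁻¹ : (ZMod m)ˣ), (ub⁻¹ : (ZMod n)ˣ)), by
        simp [Prod.mul_def]⟩
    exact this.map e.symm.toRingHom
  · intro q hq
    have h1 : e ((q : ℕ) : ZMod (m * n)) = (a, b) := by
      rw [hq, RingEquiv.apply_symm_apply]
    have h2 : e ((q : ℕ) : ZMod (m * n)) = ((q : ZMod m), (q : ZMod n)) := by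
      rw [map_natCast e q]
      exact Prod.ext (Prod.fst_natCast q) (Prod.snd_natCast q)
    rw [h1] at h2
    exact ⟨congrArg Prod.fst h2.symm, congrArg Prod.snd h2.symm⟩

/-- For an odd prime `p`, there is a unit `b` of `ZMod p` such that every prime
`q ≡ 3 (mod 4)` with `q ≡ b (mod p)` satisfies `(p/q) = -1`. -/
lemma aux_residue (p : ℕ) (hp : p.Prime) (hp2 : p ≠ 2) :
    ∃ b : ZMod p, IsUnit b ∧
      ∀ q : ℕ, ∀ hq : q.Prime, q % 4 = 3 → (q : ZMod p) = b →
        @legendreSym q ⟨hq⟩ (p : ℤ) = -1 := by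
  haveI : Fact p.Prime := ⟨hp⟩
  have hodd : p % 2 = 1 := Nat.odd_iff.mp (hp.odd_of_ne_two hp2)
  have h4 : p % 4 = 1 ∨ p % 4 = 3 := by omega
  rcases h4 with h1 | h3
  · obtain ⟨b, hb⟩ := quadraticChar_exists_neg_one
      (by rw [ZMod.ringChar_zmod_n]; exact hp2 : ringChar (ZMod p) ≠ 2)
    have hbne : b ≠ 0 := by
      intro h
      rw [h] at hb
      simp at hb
    refine ⟨b, hbne.isUnit, fun q hq hq4 hqb => ?_⟩
    haveI : Fact q.Prime := ⟨hq⟩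
    have hq2 : q ≠ 2 := by omega
    rw [legendreSym.quadratic_reciprocity_one_mod_four h1 hq2]
    rw [legendreSym]
    rwa [Int.cast_natCast, hqb]
  · refine ⟨1, isUnit_one, fun q hq hq4 hqb => ?_⟩
    haveI : Fact q.Prime := ⟨hq⟩
    rw [legendreSym.quadratic_reciprocity_three_mod_four h3 hq4]
    rw [legendreSym, Int.cast_natCast, hqb]
    simp

/-- The quadratic case of Artin's lemma on auxiliary primes: for an odd prime `p₁` and `p₂`
either `-1` or a positive prime different from `p₁`, there are infinitely many primes `q` with
`(p₁/q) = (p₂/q) = -1`. -/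
theorem artin_auxiliary_primes (p₁ : ℕ) (hp₁ : p₁.Prime) (hodd : p₁ ≠ 2)
    (p₂ : ℤ) (hp₂ : p₂ = -1 ∨ (0 < p₂ ∧ Prime p₂ ∧ p₂ ≠ (p₁ : ℤ))) :
    {q : ℕ | ∃ hq : q.Prime,
      @legendreSym q ⟨hq⟩ (p₁ : ℤ) = -1 ∧ @legendreSym q ⟨hq⟩ p₂ = -1}.Infinite := by
  obtain ⟨b₁, hb₁u, hb₁⟩ := aux_residue p₁ hp₁ hodd
  have hcop2 : Nat.Coprime 2 p₁ := (Nat.coprime_primes Nat.prime_two hp₁).mpr (Ne.symm hodd)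
  have hcop8 : Nat.Coprime 8 p₁ := by
    have := hcop2.pow_left 3
    norm_num at this
    exact this
  have h3u : IsUnit (3 : ZMod 8) := by decide
  obtain ⟨c, hcu, hc⟩ := crt_aux hcop8 3 b₁ h3u hb₁u
  haveI : NeZero (8 * p₁) := ⟨by simp [hp₁.ne_zero]⟩
  -- common facts about a prime q with q ≡ c (mod 8 p₁)
  have key : ∀ q : ℕ, ∀ hq : q.Prime, (q : ZMod (8 * p₁)) = c →
      q % 8 = 3 ∧ @legendreSym q ⟨hq⟩ (p₁ : ℤ) = -1 := by
    intro q hq hqc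
    obtain ⟨hq8, hqp⟩ := hc q hqc
    have h8 : q % 8 = 3 := by
      have h3 : (q : ZMod 8) = ((3 : ℕ) : ZMod 8) := by rw [hq8]; norm_num
      have := (ZMod.natCast_eq_natCast_iff _ _ _).mp h3
      simpa [Nat.ModEq] using this
    exact ⟨h8, hb₁ q hq (by omega) hqp⟩
  rcases hp₂ with rfl | ⟨hpos, hpP, hne⟩
  · refine (Nat.infinite_setOfPred_prime_and_eq_mod hcu).mono ?_
    rintro q ⟨hq, hqc⟩
    obtain ⟨h8, hL1⟩ := key q hq hqc
    haveI : Fact q.Prime := ⟨hq⟩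
    refine ⟨hq, hL1, ?_⟩
    rw [legendreSym.at_neg_one (by omega : q ≠ 2)]
    exact ZMod.χ₄_nat_three_mod_four (by omega)
  · set n₂ := p₂.natAbs with hn₂def
    have hn : (n₂ : ℤ) = p₂ := Int.natAbs_of_nonneg hpos.le
    have hn₂ : n₂.Prime := Int.prime_iff_natAbs_prime.mp hpP
    by_cases h2 : n₂ = 2
    · refine (Nat.infinite_setOfPred_prime_and_eq_mod hcu).mono ?_
      rintro q ⟨hq, hqc⟩
      obtain ⟨h8, hL1⟩ := key q hq hqc
      haveI : Fact q.Prime := ⟨hq⟩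
      refine ⟨hq, hL1, ?_⟩
      rw [← hn, h2]
      rw [show ((2 : ℕ) : ℤ) = 2 by norm_num, legendreSym.at_two (by omega : q ≠ 2)]
      rw [ZMod.χ₈_nat_mod_eight, h8]
      decide
    · have hne' : p₁ ≠ n₂ := by
        intro h
        exact hne (by rw [← hn, h])
      obtain ⟨b₂, hb₂u, hb₂⟩ := aux_residue n₂ hn₂ h2
      have hcop8' : Nat.Coprime 8 n₂ := by
        have := ((Nat.coprime_primes Nat.prime_two hn₂).mpr (Ne.symm h2)).pow_left 3
        norm_num at this
        exact this
      have hcop' : Nat.Coprime (8 * p₁) n₂ :=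
        Nat.Coprime.mul hcop8' ((Nat.coprime_primes hp₁ hn₂).mpr hne')
      obtain ⟨c₂, hc₂u, hc₂⟩ := crt_aux hcop' c b₂ hcu hb₂u
      haveI : NeZero (8 * p₁ * n₂) := ⟨by simp [hp₁.ne_zero, hn₂.ne_zero]⟩
      refine (Nat.infinite_setOfPred_prime_and_eq_mod hc₂u).mono ?_
      rintro q ⟨hq, hqc⟩
      obtain ⟨hq1, hqn⟩ := hc₂ q hqc
      obtain ⟨h8, hL1⟩ := key q hq hq1
      haveI : Fact q.Prime := ⟨hq⟩
      refine ⟨hq, hL1, ?_⟩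
      rw [← hn]
      exact hb₂ q hq (by omega) hqn
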